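/- For every r ≥ 2, f(3, r) ≤ √e · 2^r · (r+1)! + 2r + 1, where f(3, r) is the minimum number N such that the Zimin pattern Z_3 = x_1 x_2 x_1 x_3 x_1 x_2 x_1 embeds in every word of length at least N over an r-letter alphabet. -/

import Mathlib

open List Filter

/-- The Zimin pattern `Z_k` as a word over variables `0, 1, ..., k-1`
(`Z_0` is empty, `Z_{k+1} = Z_k · x_{k+1} · Z_k`). -/
def ziminWord : ℕ → List ℕ
  | 0 => []
  | k + 1 => ziminWord k ++ k :: ziminWord k

/-- `w` is the image of the Zimin pattern `Z_k` under a non-erasing morphism. -/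
def IsZiminImage {α : Type*} (k : ℕ) (w : List α) : Prop :=
  ∃ h : ℕ → List α, (∀ i, h i ≠ []) ∧ w = (ziminWord k).flatMap h

/-- The Zimin type of `w`: the maximum `k` such that `w` is an image of `Z_k`
under a non-erasing morphism (0 for the empty word). -/
noncomputable def ziminType {α : Type*} (w : List α) : ℕ :=
  sSup {k | IsZiminImage k w}

/-- The Zimin pattern `Z_k` embeds in `w`: some factor of `w` is an image of `Z_k`. -/
def ziminEmbeds {α : Type*} (k : ℕ) (w : List α) : Prop :=
  ∃ u : List α, u <:+: w ∧ IsZiminImage k u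

/-- Length of the longest border (proper prefix that is also a proper suffix) of `w`. -/
noncomputable def bordLen {α : Type*} (w : List α) : ℕ :=
  sSup {j | w.take j <:+ w ∧ j < w.length}

/-- Length of the longest short border (border of length `< |w|/2`) of `w`. -/
noncomputable def shortBordLen {α : Type*} (w : List α) : ℕ :=
  sSup {j | w.take j <:+ w ∧ 2 * j < w.length}

/-- The longest border of `w`. -/
noncomputable def bord {α : Type*} (w : List α) : List α := w.take (bordLen w)

/-- The longest short border of `w`. -/
noncomputable def shortBord {α : Type*} (w : List α) : List α := w.take (shortBordLen w)

/-- The Fibonacci words over `Bool` (`a = false`, `b = true`), with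
`fibWord 0 = F_0 = a`, `fibWord 1 = F_1 = F_0 F_{-1} = ab`, `F_{n} = F_{n-1} F_{n-2}`. -/
def fibWord : ℕ → List Bool
  | 0 => [false]
  | 1 => [false, true]
  | n + 2 => fibWord (n + 1) ++ fibWord n

/-- The Fibonacci numbers `Φ_n = |F_n|` (`Φ_0 = 1, Φ_1 = 2, Φ_2 = 3, ...`). -/
def Phi (n : ℕ) : ℕ := (fibWord n).length

/-- The infinite Fibonacci word `F_∞` (0-indexed letters). -/
def fibInf (i : ℕ) : Bool := (fibWord (i + 2)).getD i false

/-- The prefix `F_∞[1..n]` of the infinite Fibonacci word. -/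
def fibPrefix (n : ℕ) : List Bool := (List.range n).map fibInf


/-- `f(n,k)`: the minimum `N` such that `Z_n` embeds in every word of length at
least `N` over a `k`-letter alphabet. -/
noncomputable def fbound (n k : ℕ) : ℕ :=
  sInf {N | ∀ w : List (Fin k), N ≤ w.length → ziminEmbeds n w}

/-! ### Auxiliary material for the proof -/

section ZiminAux

open Finset

/-- Expand a run code: `(a, false) ↦ [a]`, `(a, true) ↦ [a,a]`. -/
def expandRun {α : Type*} (p : α × Bool) : List α := if p.2 then [p.1, p.1] else [p.1]

/-- The finite type of codes for canonical short `Z_2`-images. -/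
def CodeT (r : ℕ) : Type :=
  Σ a : Fin r, Σ j : Fin r, (Fin j.val ↪ {x : Fin r // x ≠ a}) × (Fin j.val → Bool)

noncomputable instance codeTFintype (r : ℕ) : Fintype (CodeT r) := by unfold CodeT; infer_instance

/-- Decode a code into a word. -/
def decodeC {r : ℕ} : CodeT r → List (Fin r)
  | ⟨a, j, f, e⟩ =>
    if j.val = 0 then [a, a, a]
    else a :: ((List.ofFn fun i : Fin j.val => (((f i) : Fin r), e i)).flatMap expandRun) ++ [a]

/-- No two equal letters at distance `≥ 2`. -/
def NoFarRep {α : Type*} (d : α) (l : List α) : Prop :=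
  ∀ p q, p + 2 ≤ q → q < l.length → l.getD p d ≠ l.getD q d

lemma noFarRep_cons {α : Type*} {d x : α} {l : List α} (h : NoFarRep d (x :: l)) :
    NoFarRep d l := by
  intro p q hpq hq
  have := h (p + 1) (q + 1) (by omega) (by simp; omega)
  simpa using this

lemma exists_rle {α : Type*} (d : α) :
    ∀ (n : ℕ) (l : List α), l.length ≤ n → NoFarRep d l →
      ∃ c : List (α × Bool), l = c.flatMap expandRun ∧ (c.map Prod.fst).Nodup ∧
        ∀ x ∈ c.map Prod.fst, x ∈ l := by
  intro n
  induction n with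
  | zero =>
    intro l hl _
    have : l = [] := List.length_eq_zero_iff.mp (by omega)
    exact ⟨[], by simp [this], by simp, by simp⟩
  | succ n ih =>
    intro l hl hQ
    match l with
    | [] => exact ⟨[], by simp, by simp, by simp⟩
    | [x] => exact ⟨[(x, false)], by simp [expandRun], by simp, by simp⟩
    | x :: y :: t =>
      have hxt : x ∉ t := by
        intro hx
        obtain ⟨k, hk, hkx⟩ := List.mem_iff_getElem.mp hx
        refine hQ 0 (k + 2) (by omega) (by simp; omega) ?_
        rw [List.getD_cons_zero, List.getD_cons_succ, List.getD_cons_succ,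
          List.getD_eq_getElem _ _ hk, hkx]
      by_cases hxy : x = y
      · subst hxy
        have hQt : NoFarRep d t := by
          intro p q hpq hq
          have := hQ (p + 2) (q + 2) (by omega) (by simp; omega)
          simpa using this
        obtain ⟨c, hc1, hc2, hc3⟩ := ih t (by simp at hl ⊢; omega) hQt
        refine ⟨(x, true) :: c, by simp [expandRun, ← hc1], ?_, ?_⟩
        · simp only [List.map_cons, List.nodup_cons]
          exact ⟨fun hmem => hxt (hc3 x hmem), hc2⟩
        · intro z hz
          simp only [List.map_cons, List.mem_cons] at hz
          rcases hz with rfl | hz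
          · simp
          · have := hc3 z hz
            simp [this]
      · have hQyt : NoFarRep d (y :: t) := noFarRep_cons hQ
        obtain ⟨c, hc1, hc2, hc3⟩ := ih (y :: t) (by simp at hl ⊢; omega) hQyt
        refine ⟨(x, false) :: c, by simp [expandRun, ← hc1], ?_, ?_⟩
        · simp only [List.map_cons, List.nodup_cons]
          refine ⟨fun hmem => ?_, hc2⟩
          have := hc3 x hmem
          rcases List.mem_cons.mp this with h | h
          · exact hxy h
          · exact hxt h
        · intro z hz
          simp only [List.map_cons, List.mem_cons] at hz
          rcases hz with rfl | hz
          · simp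
          · have := hc3 z hz
            rcases List.mem_cons.mp this with h | h
            · simp [h]
            · simp [h]

lemma isZiminImage_two {α : Type*} {w A B : List α} (hA : A ≠ []) (hB : B ≠ [])
    (hw : w = A ++ B ++ A) : IsZiminImage 2 w := by
  refine ⟨fun n => if n = 1 then B else A, fun i => by dsimp only; split <;> assumption, ?_⟩
  have h2 : ziminWord 2 = [0, 1, 0] := by decide
  rw [h2, hw]
  simp

lemma isZiminImage_three {α : Type*} {w u m : List α} (hu : IsZiminImage 2 u) (hm : m ≠ [])
    (hw : w = u ++ m ++ u) : IsZiminImage 3 w := by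
  obtain ⟨g, hg, hgu⟩ := hu
  refine ⟨fun n => if n = 2 then m else g n, fun i => by dsimp only; split <;> [exact hm; exact hg i], ?_⟩
  have h3 : ziminWord 3 = [0, 1, 0, 2, 0, 1, 0] := by decide
  have h2 : ziminWord 2 = [0, 1, 0] := by decide
  rw [h2] at hgu
  rw [h3, hw, hgu]
  simp

end ZiminAux

section Window

lemma window_code {r : ℕ} (hr : 2 ≤ r) (v : List (Fin r)) (hv : v.length = 2 * r + 1) :
    ∃ t : CodeT r, decodeC t <:+: v ∧ IsZiminImage 2 (decodeC t) := by
  classical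
  have hr0 : 0 < r := by omega
  set a₀ : Fin r := ⟨0, hr0⟩ with ha₀
  -- Step 1: pigeonhole gives a repetition at distance ≥ 2
  have hpigeon : ∃ dd, 2 ≤ dd ∧ ∃ i, i + dd < v.length ∧ v.getD i a₀ = v.getD (i + dd) a₀ := by
    obtain ⟨y, -, hy⟩ := Finset.exists_lt_card_fiber_of_mul_lt_card_of_maps_to
      (s := Finset.range (2 * r + 1)) (t := Finset.univ) (f := fun i => v.getD i a₀) (n := 2)
      (fun a _ => Finset.mem_univ _) (by simp; omega)
    set S := Finset.filter (fun x => v.getD x a₀ = y) (Finset.range (2 * r + 1)) with hS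
    have hSne : S.Nonempty := Finset.card_pos.mp (by omega)
    have hsub : S ⊆ Finset.Icc (S.min' hSne) (S.max' hSne) := fun x hx =>
      Finset.mem_Icc.mpr ⟨S.min'_le x hx, S.le_max' x hx⟩
    have hcard : S.card ≤ S.max' hSne + 1 - S.min' hSne := by
      simpa [Nat.card_Icc] using Finset.card_le_card hsub
    have hminmem := Finset.mem_filter.mp (S.min'_mem hSne)
    have hmaxmem := Finset.mem_filter.mp (S.max'_mem hSne)
    have hminlt := Finset.mem_range.mp hminmem.1
    have hmaxlt := Finset.mem_range.mp hmaxmem.1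
    refine ⟨S.max' hSne - S.min' hSne, by omega, S.min' hSne, by omega, ?_⟩
    rw [hminmem.2, show S.min' hSne + (S.max' hSne - S.min' hSne) = S.max' hSne by omega,
      hmaxmem.2]
  -- Step 2: minimal repetition distance d
  set P : Set ℕ := {dd | 2 ≤ dd ∧ ∃ i, i + dd < v.length ∧ v.getD i a₀ = v.getD (i + dd) a₀}
    with hP
  have hPne : P.Nonempty := hpigeon
  have hdP : sInf P ∈ P := Nat.sInf_mem hPne
  set d : ℕ := sInf P with hd
  rw [hP, Set.mem_setOf_eq] at hdP
  obtain ⟨hd2, i, hid, hvi⟩ := hdP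
  have hmin : ∀ d' ∈ P, d ≤ d' := fun _ h => Nat.sInf_le h
  -- the inner word u' and the letter a
  set u' : List (Fin r) := (v.drop (i + 1)).take (d - 1) with hu'
  have hlu' : u'.length = d - 1 := by
    simp only [hu', List.length_take, List.length_drop]
    omega
  have hu'getD : ∀ p, p < d - 1 → u'.getD p a₀ = v.getD (i + 1 + p) a₀ := by
    intro p hp
    have h1 : p < u'.length := by omega
    have h2 : i + 1 + p < v.length := by omega
    rw [List.getD_eq_getElem _ _ h1, List.getD_eq_getElem _ _ h2]
    simp only [hu', List.getElem_take, List.getElem_drop]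
  have hQ : NoFarRep a₀ u' := by
    intro p q hpq hq heq
    rw [hlu'] at hq
    rw [hu'getD p (by omega), hu'getD q (by omega)] at heq
    have hmem : q - p ∈ P := by
      refine ⟨by omega, i + 1 + p, by omega, ?_⟩
      rw [show i + 1 + p + (q - p) = i + 1 + q by omega]
      exact heq
    have := hmin _ hmem
    omega
  set a : Fin r := v.getD i a₀ with haa
  have hnotin : u' ≠ [a] → ∀ x ∈ u', x ≠ a := by
    intro hne x hx hxa
    obtain ⟨k, hk, hkx⟩ := List.mem_iff_getElem.mp hx
    have hkd : u'.getD k a₀ = a := by rw [List.getD_eq_getElem _ _ hk, hkx, hxa]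
    rw [hlu'] at hk
    have hvk : v.getD (i + 1 + k) a₀ = a := by rw [← hu'getD k hk]; exact hkd
    rcases Nat.eq_zero_or_pos k with rfl | hkpos
    · rcases Nat.lt_or_ge (d - 1) 2 with hsmall | hbig
      · -- then u' = [a]
        apply hne
        have hlen1 : u'.length = 1 := by omega
        obtain ⟨b, hb⟩ := List.length_eq_one_iff.mp hlen1
        have hball : u'.getD 0 a₀ = b := by rw [hb]; rfl
        rw [hb]
        rw [hball] at hkd
        rw [hkd]
      · -- d - 1 ∈ P, contradiction with minimality
        have hmem : d - 1 ∈ P := by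
          refine ⟨hbig, i + 1, by omega, ?_⟩
          rw [show i + 1 + (d - 1) = i + d by omega]
          have h1 : v.getD (i + 1) a₀ = a := by
            have := hvk
            rwa [show i + 1 + 0 = i + 1 by omega] at this
          rw [h1, ← hvi]
        have := hmin _ hmem
        omega
    · -- k + 1 ∈ P, contradiction with minimality
      have hmem : 1 + k ∈ P := by
        refine ⟨by omega, i, by omega, ?_⟩
        rw [show i + (1 + k) = i + 1 + k by omega, hvk, haa]
      have := hmin _ hmem
      omega
  have hu'ne : u' ≠ [] := by
    intro h
    rw [h] at hlu'
    simp at hlu'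
    omega
  -- infix decomposition of v
  have hiv : i < v.length := by omega
  have hvtakei : v = v.take i ++ (a :: (u' ++ [a])) ++ v.drop (i + d + 1) := by
    have hva : a = v[i] := by rw [haa, List.getD_eq_getElem _ _ hiv]
    have hvad : a = v[i + d]'hid := by
      rw [hvi, List.getD_eq_getElem _ _ hid]
    have e1 : v.drop i = a :: v.drop (i + 1) := by
      rw [List.drop_eq_getElem_cons hiv, ← hva]
    have e3 : v.drop (i + d) = a :: v.drop (i + d + 1) := by
      rw [List.drop_eq_getElem_cons hid, ← hvad]
    have e2 : v.drop (i + 1) = u' ++ v.drop (i + d) := by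
      conv_lhs => rw [← List.take_append_drop (d - 1) (v.drop (i + 1))]
      rw [List.drop_drop, show i + 1 + (d - 1) = i + d by omega, ← hu']
    calc v = v.take i ++ v.drop i := (List.take_append_drop i v).symm
      _ = _ := by rw [e1, e2, e3]; simp
  have hinfix : (a :: (u' ++ [a])) <:+: v :=
    ⟨v.take i, v.drop (i + d + 1), by rw [← hvtakei]⟩
  have himg : IsZiminImage 2 (a :: (u' ++ [a])) :=
    isZiminImage_two (A := [a]) (B := u') (by simp) hu'ne (by simp)
  by_cases hcase : u' = [a]
  · -- special code (j = 0): the word aaa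
    refine ⟨⟨a, ⟨0, by omega⟩, ⟨fun x => x.elim0, fun x => x.elim0⟩, fun x => x.elim0⟩, ?_, ?_⟩
    · have hdec : decodeC (⟨a, ⟨0, by omega⟩, ⟨fun x => x.elim0, fun x => x.elim0⟩,
          fun x => x.elim0⟩ : CodeT r) = a :: (u' ++ [a]) := by
        rw [hcase]; simp [decodeC]
      rw [hdec]; exact hinfix
    · have hdec : decodeC (⟨a, ⟨0, by omega⟩, ⟨fun x => x.elim0, fun x => x.elim0⟩,
          fun x => x.elim0⟩ : CodeT r) = a :: (u' ++ [a]) := by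
        rw [hcase]; simp [decodeC]
      rw [hdec]; exact himg
  · -- main code: run-length encoding of u'
    have hletters : ∀ x ∈ u', x ≠ a := hnotin hcase
    obtain ⟨c, hc1, hc2, hc3⟩ := exists_rle a₀ u'.length u' le_rfl hQ
    have hcne : c ≠ [] := by
      rintro rfl
      simp at hc1
      exact hu'ne hc1
    have hclen : c.length ≤ r - 1 := by
      have h1 : (c.map Prod.fst).toFinset ⊆ Finset.univ.erase a := by
        intro x hx
        rw [List.mem_toFinset] at hx
        exact Finset.mem_erase.mpr ⟨hletters x (hc3 x hx), Finset.mem_univ x⟩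
      have h2 := Finset.card_le_card h1
      rw [List.toFinset_card_of_nodup hc2, Finset.card_erase_of_mem (Finset.mem_univ _)] at h2
      simpa using h2
    have hmemf : ∀ k : Fin c.length, (c.get k).1 ∈ c.map Prod.fst := fun k =>
      List.mem_map.mpr ⟨c.get k, List.get_mem c k, rfl⟩
    have hfprop : ∀ k : Fin c.length, (c.get k).1 ≠ a := fun k =>
      hletters _ (hc3 _ (hmemf k))
    have hfinj : Function.Injective
        (fun k : Fin c.length => (⟨(c.get k).1, hfprop k⟩ : {x : Fin r // x ≠ a})) := by
      intro k k' hkk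
      have hval : (c.get k).1 = (c.get k').1 := congrArg Subtype.val hkk
      have h1 : (c.map Prod.fst)[k.val]'(by simpa using k.isLt) = (c.map Prod.fst)[k'.val]'(by simpa using k'.isLt) := by
        simpa [List.get_eq_getElem] using hval
      exact Fin.ext (hc2.getElem_inj_iff.mp h1)
    refine ⟨⟨a, ⟨c.length, by omega⟩, ⟨_, hfinj⟩, fun k => (c.get k).2⟩, ?_, ?_⟩
    all_goals {
      have hdec : decodeC (⟨a, ⟨c.length, by omega⟩, ⟨_, hfinj⟩,
          fun k => (c.get k).2⟩ : CodeT r) = a :: (u' ++ [a]) := by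
        have hc0 : ¬ ((⟨c.length, by omega⟩ : Fin r).val = 0) := by
          simp only [Fin.val_mk]
          exact fun h => hcne (List.length_eq_zero_iff.mp h)
        simp only [decodeC]
        rw [if_neg hc0]
        simp only [Function.Embedding.coeFn_mk]
        have hofn : (List.ofFn fun k : Fin c.length =>
            (((⟨(c.get k).1, hfprop k⟩ : {x : Fin r // x ≠ a}) : Fin r), (c.get k).2)) = c := by
          have heq : (fun k : Fin c.length =>
              (((⟨(c.get k).1, hfprop k⟩ : {x : Fin r // x ≠ a}) : Fin r), (c.get k).2)) =
              fun k => c.get k := by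
            funext k
            simp
          rw [heq, List.ofFn_get]
        rw [hofn, ← hc1, List.cons_append]
      rw [hdec]
      first
      | exact hinfix
      | exact himg
    }

end Window

section Embeds

lemma embeds_of_long {r : ℕ} (hr : 2 ≤ r) (w : List (Fin r))
    (hw : Fintype.card (CodeT r) * (2 * r + 2) + (2 * r + 1) ≤ w.length) :
    ziminEmbeds 3 w := by
  classical
  set K := Fintype.card (CodeT r) with hK
  have hvlen : ∀ i : Fin (K + 1),
      ((w.drop (i.val * (2 * r + 2))).take (2 * r + 1)).length = 2 * r + 1 := by
    intro i
    have h1 : i.val ≤ K := Nat.lt_succ_iff.mp i.isLt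
    have h2 : i.val * (2 * r + 2) ≤ K * (2 * r + 2) := Nat.mul_le_mul_right _ h1
    simp only [List.length_take, List.length_drop]
    omega
  have hcode := fun i : Fin (K + 1) => window_code hr _ (hvlen i)
  choose F hF1 hF2 using hcode
  have key : ∀ i i' : Fin (K + 1), i.val < i'.val → F i = F i' → ziminEmbeds 3 w := by
    intro i i' hlt heq
    obtain ⟨s₁, t₁, hv₁⟩ := hF1 i
    have hinf2 : decodeC (F i) <:+: (w.drop (i'.val * (2 * r + 2))).take (2 * r + 1) := by
      rw [heq]; exact hF1 i'
    obtain ⟨s₂, t₂, hv₂⟩ := hinf2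
    set u := decodeC (F i) with hu
    have hiK : i.val ≤ K := Nat.lt_succ_iff.mp i.isLt
    have hi'K : i'.val ≤ K := Nat.lt_succ_iff.mp i'.isLt
    have hmul1 : i.val * (2 * r + 2) ≤ K * (2 * r + 2) := Nat.mul_le_mul_right _ hiK
    have hmul2 : i'.val * (2 * r + 2) ≤ K * (2 * r + 2) := Nat.mul_le_mul_right _ hi'K
    have hgap : i.val * (2 * r + 2) + (2 * r + 2) ≤ i'.val * (2 * r + 2) := by
      have := Nat.mul_le_mul_right (2 * r + 2) (show i.val + 1 ≤ i'.val by omega)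
      rw [Nat.succ_mul] at this
      exact this
    have hlen1 : s₁.length + u.length + t₁.length = 2 * r + 1 := by
      have := congrArg List.length hv₁
      rw [hvlen i] at this
      simp at this
      omega
    have hlen2 : s₂.length + u.length + t₂.length = 2 * r + 1 := by
      have := congrArg List.length hv₂
      rw [hvlen i'] at this
      simp at this
      omega
    have hsplit : ∀ j : Fin (K + 1), w = w.take (j.val * (2 * r + 2)) ++
        (((w.drop (j.val * (2 * r + 2))).take (2 * r + 1)) ++
          w.drop (j.val * (2 * r + 2) + (2 * r + 1))) := by
      intro j
      conv_lhs => rw [← List.take_append_drop (j.val * (2 * r + 2)) w]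
      congr 1
      conv_lhs => rw [← List.take_append_drop (2 * r + 1) (w.drop (j.val * (2 * r + 2)))]
      rw [List.drop_drop]
    have hw1 : w = (w.take (i.val * (2 * r + 2)) ++ s₁) ++ u ++
        (t₁ ++ w.drop (i.val * (2 * r + 2) + (2 * r + 1))) := by
      have h := hsplit i
      rw [← hv₁] at h
      simpa only [List.append_assoc] using h
    have hw2 : w = (w.take (i'.val * (2 * r + 2)) ++ s₂) ++ u ++
        (t₂ ++ w.drop (i'.val * (2 * r + 2) + (2 * r + 1))) := by
      have h := hsplit i'
      rw [← hv₂] at h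
      simpa only [List.append_assoc] using h
    have hXlen : (w.take (i.val * (2 * r + 2)) ++ s₁).length = i.val * (2 * r + 2) + s₁.length := by
      simp only [List.length_append, List.length_take]
      omega
    have hX'len : (w.take (i'.val * (2 * r + 2)) ++ s₂).length =
        i'.val * (2 * r + 2) + s₂.length := by
      simp only [List.length_append, List.length_take]
      omega
    have htake1 : w.take (i.val * (2 * r + 2) + s₁.length) = w.take (i.val * (2 * r + 2)) ++ s₁ := by
      conv_lhs => rw [hw1]
      rw [List.append_assoc, List.take_left' hXlen]
    have htake2 : w.take (i.val * (2 * r + 2) + s₁.length + u.length) =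
        (w.take (i.val * (2 * r + 2)) ++ s₁) ++ u := by
      conv_lhs => rw [hw1]
      rw [List.take_left' (by simp [hXlen]; omega)]
    have htake3 : w.take (i'.val * (2 * r + 2) + s₂.length) =
        w.take (i'.val * (2 * r + 2)) ++ s₂ := by
      conv_lhs => rw [hw2]
      rw [List.append_assoc, List.take_left' hX'len]
    have hpp' : i.val * (2 * r + 2) + s₁.length + u.length <
        i'.val * (2 * r + 2) + s₂.length := by omega
    have hp'w : i'.val * (2 * r + 2) + s₂.length ≤ w.length := by omega
    have hm : w.take (i'.val * (2 * r + 2) + s₂.length) =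
        w.take (i.val * (2 * r + 2) + s₁.length + u.length) ++
          ((w.take (i'.val * (2 * r + 2) + s₂.length)).drop
            (i.val * (2 * r + 2) + s₁.length + u.length)) := by
      conv_lhs => rw [← List.take_append_drop (i.val * (2 * r + 2) + s₁.length + u.length)
        (w.take (i'.val * (2 * r + 2) + s₂.length))]
      rw [List.take_take, min_eq_left (by omega)]
    set m := (w.take (i'.val * (2 * r + 2) + s₂.length)).drop
      (i.val * (2 * r + 2) + s₁.length + u.length) with hmdef
    have hmlen : m.length =
        i'.val * (2 * r + 2) + s₂.length - (i.val * (2 * r + 2) + s₁.length + u.length) := by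
      simp only [hmdef, List.length_drop, List.length_take]
      omega
    have hmne : m ≠ [] := by
      intro h
      rw [h] at hmlen
      simp at hmlen
      omega
    have hfinal : w = w.take (i.val * (2 * r + 2) + s₁.length) ++ (u ++ m ++ u) ++
        (t₂ ++ w.drop (i'.val * (2 * r + 2) + (2 * r + 1))) := by
      have hX' : w.take (i'.val * (2 * r + 2)) ++ s₂ =
          ((w.take (i.val * (2 * r + 2) + s₁.length) ++ u) ++ m) := by
        rw [← htake3, hm, htake2, htake1]
      calc w = (w.take (i'.val * (2 * r + 2)) ++ s₂) ++ u ++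
          (t₂ ++ w.drop (i'.val * (2 * r + 2) + (2 * r + 1))) := hw2
        _ = ((w.take (i.val * (2 * r + 2) + s₁.length) ++ u) ++ m) ++ u ++
          (t₂ ++ w.drop (i'.val * (2 * r + 2) + (2 * r + 1))) := by rw [hX']
        _ = _ := by simp [List.append_assoc]
    exact ⟨u ++ m ++ u,
      ⟨w.take (i.val * (2 * r + 2) + s₁.length),
        t₂ ++ w.drop (i'.val * (2 * r + 2) + (2 * r + 1)), hfinal.symm⟩,
      isZiminImage_three (hF2 i) hmne rfl⟩
  obtain ⟨i1, i2, hne, heq⟩ := Fintype.exists_ne_map_eq_of_card_lt F (by simp; omega)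
  have hvne : i1.val ≠ i2.val := fun h => hne (Fin.ext h)
  rcases Nat.lt_or_ge i1.val i2.val with h | h
  · exact key i1 i2 h heq
  · exact key i2 i1 (by omega) heq.symm

end Embeds

section Count

lemma card_codeT (s : ℕ) :
    Fintype.card (CodeT (s + 2)) =
      (s + 2) * ∑ j ∈ Finset.range (s + 2), (s + 1).descFactorial j * 2 ^ j := by
  classical
  have hsub : ∀ a : Fin (s + 2), Fintype.card {x : Fin (s + 2) // x ≠ a} = s + 1 := by
    intro a
    have h := Fintype.card_subtype_compl (fun x : Fin (s + 2) => x = a)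
    rw [Fintype.card_subtype_eq, Fintype.card_fin] at h
    simpa using h
  unfold CodeT
  rw [Fintype.card_sigma]
  have hinner : ∀ a : Fin (s + 2),
      Fintype.card (Σ j : Fin (s + 2),
        (Fin j.val ↪ {x : Fin (s + 2) // x ≠ a}) × (Fin j.val → Bool)) =
      ∑ j ∈ Finset.range (s + 2), (s + 1).descFactorial j * 2 ^ j := by
    intro a
    rw [Fintype.card_sigma]
    rw [← Fin.sum_univ_eq_sum_range (fun j => (s + 1).descFactorial j * 2 ^ j) (s + 2)]
    apply Finset.sum_congr rfl
    intro j _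
    rw [Fintype.card_prod, Fintype.card_embedding_eq, Fintype.card_fun]
    simp [hsub a]
  simp only [hinner]
  rw [Finset.sum_const, Finset.card_univ, Fintype.card_fin, smul_eq_mul]

lemma sum_descFactorial_le (s : ℕ) :
    ((∑ j ∈ Finset.range (s + 2), (s + 1).descFactorial j * 2 ^ j : ℕ) : ℝ) ≤
      Real.exp (1 / 2) * 2 ^ (s + 1) * (s + 1).factorial := by
  have hterm : ∀ j ∈ Finset.range (s + 2),
      (((s + 1).descFactorial (s + 1 - j) * 2 ^ (s + 1 - j) : ℕ) : ℝ) =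
        (((s + 1).factorial : ℝ) * 2 ^ (s + 1)) * ((1 / 2 : ℝ) ^ j / (j.factorial : ℝ)) := by
    intro j hj
    rw [Finset.mem_range] at hj
    have hfact : ((s + 1).descFactorial (s + 1 - j) : ℝ) * (j.factorial : ℝ) =
        ((s + 1).factorial : ℝ) := by
      have h0 := Nat.factorial_mul_descFactorial (show s + 1 - j ≤ s + 1 by omega)
      rw [show s + 1 - (s + 1 - j) = j by omega] at h0
      exact_mod_cast by rw [mul_comm]; exact h0
    have hpow : (2 : ℝ) ^ (s + 1 - j) * 2 ^ j = 2 ^ (s + 1) := by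
      rw [← pow_add]
      congr 1
      omega
    have hhalf : ((1 / 2 : ℝ) ^ j / (j.factorial : ℝ)) =
        1 / (2 ^ j * (j.factorial : ℝ)) := by
      rw [div_pow, one_pow]
      ring
    have h2j : (2 : ℝ) ^ j * (j.factorial : ℝ) ≠ 0 := by positivity
    rw [hhalf, mul_one_div, eq_div_iff h2j]
    push_cast
    calc ((s + 1).descFactorial (s + 1 - j) : ℝ) * 2 ^ (s + 1 - j) * (2 ^ j * (j.factorial : ℝ))
        = (((s + 1).descFactorial (s + 1 - j) : ℝ) * (j.factorial : ℝ)) *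
          ((2 : ℝ) ^ (s + 1 - j) * 2 ^ j) := by ring
      _ = ((s + 1).factorial : ℝ) * 2 ^ (s + 1) := by rw [hfact, hpow]
  have hre : ((∑ j ∈ Finset.range (s + 2), (s + 1).descFactorial j * 2 ^ j : ℕ) : ℝ) =
      ∑ j ∈ Finset.range (s + 2),
        (((s + 1).descFactorial (s + 1 - j) * 2 ^ (s + 1 - j) : ℕ) : ℝ) := by
    push_cast
    rw [← Finset.sum_range_reflect (fun j => ((s + 1).descFactorial j : ℝ) * 2 ^ j) (s + 2)]
    apply Finset.sum_congr rfl
    intro j _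
    push_cast
    first
    | rfl
    | rw [show s + 2 - 1 - j = s + 1 - j by omega]
  rw [hre]
  calc ∑ j ∈ Finset.range (s + 2),
        (((s + 1).descFactorial (s + 1 - j) * 2 ^ (s + 1 - j) : ℕ) : ℝ)
      = ∑ j ∈ Finset.range (s + 2),
        (((s + 1).factorial : ℝ) * 2 ^ (s + 1)) * ((1 / 2 : ℝ) ^ j / (j.factorial : ℝ)) :=
        Finset.sum_congr rfl hterm
    _ = (((s + 1).factorial : ℝ) * 2 ^ (s + 1)) *
        ∑ j ∈ Finset.range (s + 2), ((1 / 2 : ℝ) ^ j / (j.factorial : ℝ)) := by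
        rw [Finset.mul_sum]
    _ ≤ (((s + 1).factorial : ℝ) * 2 ^ (s + 1)) * Real.exp (1 / 2) := by
        apply mul_le_mul_of_nonneg_left _ (by positivity)
        exact Real.sum_le_exp_of_nonneg (by norm_num) (s + 2)
    _ = Real.exp (1 / 2) * 2 ^ (s + 1) * (s + 1).factorial := by ring

end Count


/-- For every `r ≥ 2`, `f(3,r)` is finite and
`f(3,r) ≤ √e · 2^r · (r+1)! + 2r + 1`. -/
theorem fbound_three_le (r : ℕ) (hr : 2 ≤ r) :
    {N | ∀ w : List (Fin r), N ≤ w.length → ziminEmbeds 3 w}.Nonempty ∧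
    (fbound 3 r : ℝ) ≤
      Real.sqrt (Real.exp 1) * 2 ^ r * (Nat.factorial (r + 1)) +
        2 * r + 1 := by

  obtain ⟨s, rfl⟩ : ∃ s, r = s + 2 := ⟨r - 2, by omega⟩
  have hmem : (Fintype.card (CodeT (s + 2)) * (2 * (s + 2) + 2) + (2 * (s + 2) + 1)) ∈
      {N | ∀ w : List (Fin (s + 2)), N ≤ w.length → ziminEmbeds 3 w} := by
    intro w hw
    exact embeds_of_long (by omega) w hw
  refine ⟨⟨_, hmem⟩, ?_⟩
  have hle : fbound 3 (s + 2) ≤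
      Fintype.card (CodeT (s + 2)) * (2 * (s + 2) + 2) + (2 * (s + 2) + 1) :=
    Nat.sInf_le hmem
  have hsqrt : Real.sqrt (Real.exp 1) = Real.exp (1 / 2) := by
    rw [show Real.exp 1 = Real.exp (1 / 2) * Real.exp (1 / 2) by
      rw [← Real.exp_add]; norm_num]
    exact Real.sqrt_mul_self (Real.exp_nonneg _)
  rw [hsqrt]
  have hcast : (fbound 3 (s + 2) : ℝ) ≤
      ((Fintype.card (CodeT (s + 2)) * (2 * (s + 2) + 2) + (2 * (s + 2) + 1) : ℕ) : ℝ) :=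
    Nat.cast_le.mpr hle
  refine le_trans hcast ?_
  rw [card_codeT s]
  have hsum := sum_descFactorial_le s
  have hfact3 : ((s + 2 + 1).factorial : ℝ) = (s + 3) * ((s + 2) * ((s + 1).factorial : ℝ)) := by
    rw [show s + 2 + 1 = (s + 1) + 1 + 1 by omega]
    rw [Nat.factorial_succ, Nat.factorial_succ]
    push_cast
    ring
  have key : (((s + 2) * (∑ j ∈ Finset.range (s + 2), (s + 1).descFactorial j * 2 ^ j) *
      (2 * (s + 2) + 2) : ℕ) : ℝ) ≤
      Real.exp (1 / 2) * 2 ^ (s + 2) * ((s + 2 + 1).factorial : ℝ) := by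
    rw [Nat.cast_mul, Nat.cast_mul]
    calc ((s + 2 : ℕ) : ℝ) *
          ((∑ j ∈ Finset.range (s + 2), (s + 1).descFactorial j * 2 ^ j : ℕ) : ℝ) *
          ((2 * (s + 2) + 2 : ℕ) : ℝ)
        = (((s + 2 : ℕ) : ℝ) * ((2 * (s + 2) + 2 : ℕ) : ℝ)) *
          ((∑ j ∈ Finset.range (s + 2), (s + 1).descFactorial j * 2 ^ j : ℕ) : ℝ) := by ring
      _ ≤ (((s + 2 : ℕ) : ℝ) * ((2 * (s + 2) + 2 : ℕ) : ℝ)) *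
          (Real.exp (1 / 2) * 2 ^ (s + 1) * (s + 1).factorial) := by
          apply mul_le_mul_of_nonneg_left hsum (by positivity)
      _ = Real.exp (1 / 2) * 2 ^ (s + 2) * ((s + 3) * ((s + 2) * ((s + 1).factorial : ℝ))) := by
          push_cast
          rw [show (2 : ℝ) ^ (s + 2) = 2 * 2 ^ (s + 1) by rw [pow_succ]; ring]
          ring
      _ = Real.exp (1 / 2) * 2 ^ (s + 2) * ((s + 2 + 1).factorial : ℝ) := by rw [hfact3]
  push_cast at key ⊢
  linarith
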